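/- arXiv:0803.1083 — 2 statements merged into one kernel-verified Lean document; each statement's English description precedes it below -/
import Mathlib

section
/- Let E₍?₎ satisfy 0 ≤ E₍?₎ ≤ 𝟙 and write Π₍?₎ for the orthogonal projector onto supp E₍?₎. If E₍?₎(γ₂ − γ₁)E₍?₎ = E₍?₎(γ₂ − γ₁)E₍?₎², then E₍?₎(γ₂ − γ₁)E₍?₎ = Π₍?₎(γ₂ − γ₁)Π₍?₎. -/
open Matrix ComplexOrder

private lemma toEuclideanLin_mul {n : ℕ} (A B : Matrix (Fin n) (Fin n) ℂ) :
    Matrix.toEuclideanLin (A * B)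
      = Matrix.toEuclideanLin A ∘ₗ Matrix.toEuclideanLin B := by
  apply LinearMap.ext
  intro x
  simp [Matrix.toEuclideanLin_apply, Matrix.mulVec_mulVec]

/-- If `0 ≤ E? ≤ 𝟙` and `E?(γ₂−γ₁)E? = E?(γ₂−γ₁)E?²`, then
`E?(γ₂−γ₁)E? = Π?(γ₂−γ₁)Π?` with `Π?` the orthogonal projector onto `supp E?`. -/
theorem stmt_12 {n : ℕ} (γ₁ γ₂ Eq : Matrix (Fin n) (Fin n) ℂ)
    (hγ₁ : γ₁ᴴ = γ₁) (hγ₂ : γ₂ᴴ = γ₂)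
    (hEq : Eq.PosSemidef) (hEq' : (1 - Eq).PosSemidef)
    (h : Eq * (γ₂ - γ₁) * Eq = Eq * (γ₂ - γ₁) * Eq * Eq) :
    Matrix.toEuclideanLin (Eq * (γ₂ - γ₁) * Eq)
      = ((LinearMap.range (Matrix.toEuclideanLin Eq)).subtypeL.comp
            (Submodule.orthogonalProjectionOnto (LinearMap.range (Matrix.toEuclideanLin Eq)))).toLinearMap
        ∘ₗ Matrix.toEuclideanLin (γ₂ - γ₁)
        ∘ₗ ((LinearMap.range (Matrix.toEuclideanLin Eq)).subtypeL.comp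
            (Submodule.orthogonalProjectionOnto (LinearMap.range (Matrix.toEuclideanLin Eq)))).toLinearMap := by
  set A : Matrix (Fin n) (Fin n) ℂ := γ₂ - γ₁ with hAdef
  have hEqH : Eqᴴ = Eq := hEq.1
  have hA : Aᴴ = A := by simp [hAdef, hγ₁, hγ₂]
  have h' : Eq * (Eq * A * Eq) = Eq * A * Eq := by
    have := congrArg Matrix.conjTranspose h
    simpa [Matrix.conjTranspose_mul, hEqH, hA, mul_assoc] using this.symm
  set T := Matrix.toEuclideanLin Eq with hTdef
  set S := Matrix.toEuclideanLin A with hSdef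
  have hTsym : T.IsSymmetric := Matrix.isHermitian_iff_isSymmetric.mp hEq.1
  set K := LinearMap.range T with hKdef
  have hBT : ∀ a, T (S (T (T a))) = T (S (T a)) := by
    intro a
    have := congrArg Matrix.toEuclideanLin h.symm
    rw [toEuclideanLin_mul, toEuclideanLin_mul, toEuclideanLin_mul] at this
    exact congrFun (congrArg DFunLike.coe this) a |>.symm ▸ by
      have := LinearMap.congr_fun this a
      simpa [hTdef, hSdef] using this
  have hTB : ∀ a, T (T (S (T a))) = T (S (T a)) := by
    intro a
    have := congrArg Matrix.toEuclideanLin h'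
    rw [toEuclideanLin_mul, toEuclideanLin_mul, toEuclideanLin_mul] at this
    have := LinearMap.congr_fun this a
    simpa using this
  have hker : ∀ w ∈ Kᗮ, T w = 0 := by
    intro w hw
    have h0 : (inner ℂ (T w) (T w) : ℂ) = 0 := by
      have h1 : (inner ℂ (T (T w)) w : ℂ) = 0 :=
        (Submodule.mem_orthogonal K w).mp hw (T (T w)) (LinearMap.mem_range_self T (T w))
      calc (inner ℂ (T w) (T w) : ℂ) = inner ℂ (T (T w)) w := (hTsym (T w) w).symm
        _ = 0 := h1
    exact inner_self_eq_zero.mp h0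
  have hTP : ∀ x : EuclideanSpace ℂ (Fin n),
      T ((Submodule.orthogonalProjectionOnto K x : EuclideanSpace ℂ (Fin n))) = T x := by
    intro x
    have h1 : T (x - (Submodule.orthogonalProjectionOnto K x : EuclideanSpace ℂ (Fin n))) = 0 :=
      hker _ (K.sub_starProjection_mem_orthogonal x)
    rw [map_sub, sub_eq_zero] at h1
    exact h1.symm
  apply LinearMap.ext
  intro x
  -- left side is `T (S (T x))`
  have hL : Matrix.toEuclideanLin (Eq * A * Eq) x = T (S (T x)) := by
    rw [toEuclideanLin_mul, toEuclideanLin_mul]; rfl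
  rw [hL]
  -- write the projection of `x` as `T a`
  obtain ⟨a, ha⟩ : (Submodule.orthogonalProjectionOnto K x : EuclideanSpace ℂ (Fin n)) ∈ K :=
    (Submodule.orthogonalProjectionOnto K x).2
  have hxa : T x = T (T a) := by rw [ha]; exact (hTP x).symm
  -- key: the projection of `S (T a)` equals `T (S (T a))`
  have hproj : (Submodule.orthogonalProjectionOnto K (S (T a)) : EuclideanSpace ℂ (Fin n))
      = T (S (T a)) := by
    rw [← Submodule.starProjection_apply]
    apply Submodule.eq_starProjection_of_mem_orthogonal
    · exact LinearMap.mem_range_self T (S (T a))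
    · rw [Submodule.mem_orthogonal]
      rintro u ⟨b, rfl⟩
      have : (inner ℂ (T b) (S (T a) - T (S (T a))) : ℂ)
          = inner ℂ b (T (S (T a)) - T (T (S (T a)))) := by
        rw [hTsym b (S (T a) - T (S (T a))), map_sub]
      rw [this, hTB a, sub_self, inner_zero_right]
  show T (S (T x)) =
    (Submodule.orthogonalProjectionOnto K ((S ((Submodule.orthogonalProjectionOnto K x : EuclideanSpace ℂ (Fin n))))) :
      EuclideanSpace ℂ (Fin n))
  rw [← ha, hproj, hxa, hBT a]
end

section
/- Let γ₁, γ₂ be positive semi-definite operators with supp γ₁ ∩ supp γ₂ = {0}, and let U be a unitary from the polar decomposition √γ₁√γ₂ U = F₁ where F₁ = √(√γ₁ γ₂ √γ₁). Define E₍?₎ = 𝟙 − (γ₁+γ₂)⁻{√γ₁(γ₁ − F₁)√γ₁ + √γ₂(γ₂ − F₂)√γ₂}(γ₁+γ₂)⁻ (restricted to supp(γ₁+γ₂), acting as identity on the kernel), where F₂ = √(√γ₂ γ₁ √γ₂). Then E₍?₎√γ₁ = E₍?₎√γ₂ U, and consequently E₍?₎ γ₁ E₍?₎ = E₍?₎ γ₂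 E₍?₎. -/
open Matrix ComplexOrder

noncomputable def Matrix.PosSemidef.sqrt {n 𝕜 : Type*} [Fintype n] [DecidableEq n] [RCLike 𝕜]
    {A : Matrix n n 𝕜} (hA : A.PosSemidef) : Matrix n n 𝕜 :=
  hA.1.eigenvectorUnitary.1 * diagonal ((↑) ∘ (√·) ∘ hA.1.eigenvalues) *
    (star hA.1.eigenvectorUnitary : Matrix n n 𝕜)

private lemma aux_sqrt_psd {n : ℕ} {A : Matrix (Fin n) (Fin n) ℂ} (hA : A.PosSemidef) :
    hA.sqrt.PosSemidef := by
  unfold Matrix.PosSemidef.sqrt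
  have hD : (diagonal (((↑) ∘ (√·) ∘ hA.1.eigenvalues) : Fin n → ℂ)).PosSemidef :=
    posSemidef_diagonal_iff.mpr fun i => by
      simp only [Function.comp_apply]
      exact_mod_cast Real.sqrt_nonneg _
  have := hD.mul_mul_conjTranspose_same (hA.1.eigenvectorUnitary : Matrix (Fin n) (Fin n) ℂ)
  simpa [star_eq_conjTranspose] using this

private lemma aux_sqrt_mul_self {n : ℕ} {A : Matrix (Fin n) (Fin n) ℂ} (hA : A.PosSemidef) :
    hA.sqrt * hA.sqrt = A := by
  unfold Matrix.PosSemidef.sqrt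
  set V := (hA.1.eigenvectorUnitary : Matrix (Fin n) (Fin n) ℂ)
  have hV : star V * V = 1 := Unitary.coe_star_mul_self _
  have hDD : diagonal (((↑) ∘ (√·) ∘ hA.1.eigenvalues) : Fin n → ℂ) *
      diagonal (((↑) ∘ (√·) ∘ hA.1.eigenvalues) : Fin n → ℂ) =
      diagonal (RCLike.ofReal ∘ hA.1.eigenvalues) := by
    rw [diagonal_mul_diagonal]
    congr 1; funext i
    simp only [Function.comp_apply]
    rw [← Complex.ofReal_mul, Real.mul_self_sqrt (hA.eigenvalues_nonneg i)]
    rfl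
  have hs := hA.1.spectral_theorem
  calc V * diagonal (((↑) ∘ (√·) ∘ hA.1.eigenvalues) : Fin n → ℂ) * star V *
        (V * diagonal (((↑) ∘ (√·) ∘ hA.1.eigenvalues) : Fin n → ℂ) * star V)
      = V * (diagonal (((↑) ∘ (√·) ∘ hA.1.eigenvalues) : Fin n → ℂ) * (star V * V) *
        diagonal (((↑) ∘ (√·) ∘ hA.1.eigenvalues) : Fin n → ℂ)) * star V := by
        simp only [Matrix.mul_assoc]
    _ = V * diagonal (RCLike.ofReal ∘ hA.1.eigenvalues) * star V := by
        rw [hV, Matrix.mul_one, hDD]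
    _ = A := by
        conv_rhs => rw [hs]
        simp [V, Unitary.conjStarAlgAut_apply]

private lemma aux_cancel {n : ℕ} {s N : Matrix (Fin n) (Fin n) ℂ} (hs : sᴴ = s)
    (h : s * (s * N) = 0) : s * N = 0 := by
  have h2 : (s * N)ᴴ * (s * N) = 0 := by
    rw [conjTranspose_mul, hs]
    calc Nᴴ * s * (s * N) = Nᴴ * (s * (s * N)) := by rw [Matrix.mul_assoc]
      _ = 0 := by rw [h, Matrix.mul_zero]
  exact Matrix.conjTranspose_mul_self_eq_zero.mp h2

private lemma aux_psd_add {n : ℕ} {X Y : Matrix (Fin n) (Fin n) ℂ} (hX : X.PosSemidef)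
    (hY : Y.PosSemidef) (h : X + Y = 0) : X = 0 := by
  have hmv : ∀ v : Fin n → ℂ, X *ᵥ v = 0 := by
    intro v
    rw [← hX.dotProduct_mulVec_zero_iff]
    have h1 := hX.dotProduct_mulVec_nonneg v
    have h2 := hY.dotProduct_mulVec_nonneg v
    have h3 : star v ⬝ᵥ X *ᵥ v + star v ⬝ᵥ Y *ᵥ v = 0 := by
      rw [← dotProduct_add, ← add_mulVec, h, zero_mulVec, dotProduct_zero]
    have hle : star v ⬝ᵥ X *ᵥ v ≤ 0 := by
      calc star v ⬝ᵥ X *ᵥ v = -(star v ⬝ᵥ Y *ᵥ v) := by linear_combination h3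
        _ ≤ 0 := neg_nonpos.mpr h2
    exact le_antisymm hle h1
  ext i j
  have := congrFun (hmv (Pi.single j 1)) i
  simpa using this

private lemma aux_mulE {n : ℕ} (A B : Matrix (Fin n) (Fin n) ℂ) (x : EuclideanSpace ℂ (Fin n)) :
    Matrix.toEuclideanLin (A * B) x = Matrix.toEuclideanLin A (Matrix.toEuclideanLin B x) := by
  simp only [Matrix.toEuclideanLin_apply, Equiv.apply_symm_apply, mulVec_mulVec]


/-- Fidelity form measurement: with `F₁ = √(√γ₁ γ₂ √γ₁)`, `F₂ = √(√γ₂ γ₁ √γ₂)`, a unitary `U`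
with `√γ₁√γ₂ U = F₁` and `U√γ₁√γ₂ = F₂`, and `g` the Moore–Penrose inverse of `γ₁+γ₂`,
the operator `E? = 𝟙 − g{√γ₁(γ₁−F₁)√γ₁ + √γ₂(γ₂−F₂)√γ₂}g` satisfies
`E?√γ₁ = E?√γ₂ U` and `E? γ₁ E? = E? γ₂ E?`. -/
theorem stmt_16 {n : ℕ} (γ₁ γ₂ g U F₁ F₂ : Matrix (Fin n) (Fin n) ℂ)
    (hγ₁ : γ₁.PosSemidef) (hγ₂ : γ₂.PosSemidef)
    (hdisj : LinearMap.range (Matrix.toEuclideanLin γ₁)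
        ⊓ LinearMap.range (Matrix.toEuclideanLin γ₂) = ⊥)
    (hmp1 : (γ₁ + γ₂) * g * (γ₁ + γ₂) = γ₁ + γ₂) (hmp2 : g * (γ₁ + γ₂) * g = g)
    (hmp3 : ((γ₁ + γ₂) * g)ᴴ = (γ₁ + γ₂) * g) (hmp4 : (g * (γ₁ + γ₂))ᴴ = g * (γ₁ + γ₂))
    (hU : U ∈ Matrix.unitaryGroup (Fin n) ℂ)
    (hF₁ : F₁.PosSemidef) (hF₁sq : F₁ * F₁ = hγ₁.sqrt * γ₂ * hγ₁.sqrt)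
    (hF₂ : F₂.PosSemidef) (hF₂sq : F₂ * F₂ = hγ₂.sqrt * γ₁ * hγ₂.sqrt)
    (hpol₁ : hγ₁.sqrt * hγ₂.sqrt * U = F₁) (hpol₂ : U * hγ₁.sqrt * hγ₂.sqrt = F₂) :
    (1 - g * (hγ₁.sqrt * (γ₁ - F₁) * hγ₁.sqrt + hγ₂.sqrt * (γ₂ - F₂) * hγ₂.sqrt) * g)
        * hγ₁.sqrt
      = (1 - g * (hγ₁.sqrt * (γ₁ - F₁) * hγ₁.sqrt + hγ₂.sqrt * (γ₂ - F₂) * hγ₂.sqrt) * g)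
        * hγ₂.sqrt * U
    ∧ (1 - g * (hγ₁.sqrt * (γ₁ - F₁) * hγ₁.sqrt + hγ₂.sqrt * (γ₂ - F₂) * hγ₂.sqrt) * g)
        * γ₁
        * (1 - g * (hγ₁.sqrt * (γ₁ - F₁) * hγ₁.sqrt + hγ₂.sqrt * (γ₂ - F₂) * hγ₂.sqrt) * g)
      = (1 - g * (hγ₁.sqrt * (γ₁ - F₁) * hγ₁.sqrt + hγ₂.sqrt * (γ₂ - F₂) * hγ₂.sqrt) * g)
        * γ₂
        * (1 - g * (hγ₁.sqrt * (γ₁ - F₁) * hγ₁.sqrt + hγ₂.sqrt * (γ₂ - F₂) * hγ₂.sqrt) * g) := by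
  set s₁ := hγ₁.sqrt with hs₁def
  set s₂ := hγ₂.sqrt with hs₂def
  set H := γ₁ + γ₂ with hHdef
  set A := s₁ * (γ₁ - F₁) * s₁ + s₂ * (γ₂ - F₂) * s₂ with hAdef
  set E := 1 - g * A * g with hEdef
  -- basic hermiticity / squares
  have hs₁h : s₁ᴴ = s₁ := (aux_sqrt_psd hγ₁).1.eq
  have hs₂h : s₂ᴴ = s₂ := (aux_sqrt_psd hγ₂).1.eq
  have hs₁m : s₁ * s₁ = γ₁ := aux_sqrt_mul_self hγ₁
  have hs₂m : s₂ * s₂ = γ₂ := aux_sqrt_mul_self hγ₂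
  have hγ₁h : γ₁ᴴ = γ₁ := hγ₁.1.eq
  have hγ₂h : γ₂ᴴ = γ₂ := hγ₂.1.eq
  have hHh : Hᴴ = H := by rw [hHdef, conjTranspose_add, hγ₁h, hγ₂h]
  -- unitary facts
  have hUU : Uᴴ * U = 1 := by
    have := Matrix.mem_unitaryGroup_iff'.mp hU
    rwa [Matrix.star_eq_conjTranspose] at this
  have hUU' : U * Uᴴ = 1 := by
    have := Matrix.mem_unitaryGroup_iff.mp hU
    rwa [Matrix.star_eq_conjTranspose] at this
  -- g is Hermitian
  have c1 : H * gᴴ = g * H := by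
    calc H * gᴴ = Hᴴ * gᴴ := by rw [hHh]
      _ = (g * H)ᴴ := (conjTranspose_mul g H).symm
      _ = g * H := hmp4
  have c2 : gᴴ * H = H * g := by
    calc gᴴ * H = gᴴ * Hᴴ := by rw [hHh]
      _ = (H * g)ᴴ := (conjTranspose_mul H g).symm
      _ = H * g := hmp3
  have e0 : H * gᴴ * H = H := by
    have := congrArg conjTranspose hmp1
    rwa [conjTranspose_mul, conjTranspose_mul, hHh, ← Matrix.mul_assoc] at this
  have e1 : H * g = (g * H) * (H * g) := by
    calc H * g = (H * gᴴ * H) * g := by rw [e0]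
      _ = (H * gᴴ) * (H * g) := by rw [Matrix.mul_assoc (H * gᴴ) H g]
      _ = (g * H) * (H * g) := by rw [c1]
  have e2' : g * H = (g * H) * (H * g) := by
    have e2 : H * gᴴ = (H * g) * (H * gᴴ) := by
      calc H * gᴴ = (H * g * H) * gᴴ := by rw [hmp1]
        _ = (H * g) * (H * gᴴ) := by rw [Matrix.mul_assoc (H * g) H gᴴ]
    have := congrArg conjTranspose e2
    rwa [conjTranspose_mul, conjTranspose_mul, conjTranspose_mul, conjTranspose_conjTranspose,
      hHh, hmp3] at this
  have hcomm : H * g = g * H := e1.trans e2'.symm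
  have gherm : gᴴ = g := by
    calc gᴴ = (g * H * g)ᴴ := by rw [hmp2]
      _ = gᴴ * (g * H)ᴴ := by rw [conjTranspose_mul]
      _ = gᴴ * (g * H) := by rw [hmp4]
      _ = gᴴ * (H * gᴴ) := by rw [c1]
      _ = gᴴ * (H * g) := by rw [c1.trans hcomm.symm]
      _ = (gᴴ * H) * g := by rw [Matrix.mul_assoc]
      _ = (H * g) * g := by rw [c2]
      _ = (g * H) * g := by rw [hcomm]
      _ = g := hmp2
  -- range projection facts : (H*g) acts as identity on columns of s₁, s₂
  have hQ : ∀ (γ s : Matrix (Fin n) (Fin n) ℂ), γ.PosSemidef → s * s = γ → sᴴ = s →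
      (H - γ).PosSemidef → H * g * s = s := by
    intro γ s hγ hss hsh hrest
    set Q := 1 - H * g with hQdef
    have hQh : Qᴴ = Q := by rw [hQdef, conjTranspose_sub, conjTranspose_one, hmp3]
    have hQH : Q * H = 0 := by
      rw [hQdef, Matrix.sub_mul, Matrix.one_mul, hmp1, sub_self]
    have hsum : Q * γ * Qᴴ + Q * (H - γ) * Qᴴ = 0 := by
      calc Q * γ * Qᴴ + Q * (H - γ) * Qᴴ = (Q * H) * Qᴴ := by noncomm_ring
        _ = 0 := by rw [hQH, Matrix.zero_mul]
    have hz : Q * γ * Qᴴ = 0 := aux_psd_add (hγ.mul_mul_conjTranspose_same Q)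
      (hrest.mul_mul_conjTranspose_same Q) hsum
    have hz2 : (Q * s) * (Q * s)ᴴ = 0 := by
      calc (Q * s) * (Q * s)ᴴ = Q * s * (sᴴ * Qᴴ) := by rw [conjTranspose_mul]
        _ = Q * s * (s * Qᴴ) := by rw [hsh]
        _ = Q * (s * s) * Qᴴ := by noncomm_ring
        _ = Q * γ * Qᴴ := by rw [hss]
        _ = 0 := hz
    have hz3 : Q * s = 0 := Matrix.self_mul_conjTranspose_eq_zero.mp hz2
    have : s - H * g * s = 0 := by
      calc s - H * g * s = Q * s := by rw [hQdef]; noncomm_ring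
        _ = 0 := hz3
    exact (sub_eq_zero.mp this).symm
  have hrest₁ : (H - γ₁).PosSemidef := by
    have : H - γ₁ = γ₂ := by rw [hHdef]; abel
    rwa [this]
  have hrest₂ : (H - γ₂).PosSemidef := by
    have : H - γ₂ = γ₁ := by rw [hHdef]; abel
    rwa [this]
  have Hgs₁ : H * g * s₁ = s₁ := hQ γ₁ s₁ hγ₁ hs₁m hs₁h hrest₁
  have Hgs₂ : H * g * s₂ = s₂ := hQ γ₂ s₂ hγ₂ hs₂m hs₂h hrest₂
  have s₁Hg : s₁ * (H * g) = s₁ := by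
    have := congrArg conjTranspose Hgs₁
    rwa [conjTranspose_mul, conjTranspose_mul, hHh, gherm, hs₁h, ← hcomm] at this
  have s₂Hg : s₂ * (H * g) = s₂ := by
    have := congrArg conjTranspose Hgs₂
    rwa [conjTranspose_mul, conjTranspose_mul, hHh, gherm, hs₂h, ← hcomm] at this
  have Hgγ₁ : H * g * γ₁ = γ₁ := by
    calc H * g * γ₁ = (H * g * s₁) * s₁ := by rw [← hs₁m]; noncomm_ring
      _ = s₁ * s₁ := by rw [Hgs₁]
      _ = γ₁ := hs₁m
  have Hgγ₂ : H * g * γ₂ = γ₂ := by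
    calc H * g * γ₂ = (H * g * s₂) * s₂ := by rw [← hs₂m]; noncomm_ring
      _ = s₂ * s₂ := by rw [Hgs₂]
      _ = γ₂ := hs₂m
  -- orthogonality of supports
  have hM1 : γ₂ * (g * γ₁) = γ₁ * (1 - g * γ₁) := by
    have : γ₂ * (g * γ₁) = H * g * γ₁ - γ₁ * (g * γ₁) := by rw [hHdef]; noncomm_ring
    rw [this, Hgγ₁]; noncomm_ring
  have hzero : γ₂ * (g * γ₁) = 0 := by
    have hker : Matrix.toEuclideanLin (γ₂ * (g * γ₁)) = 0 := by
      apply LinearMap.ext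
      intro x
      have h1 : Matrix.toEuclideanLin (γ₂ * (g * γ₁)) x ∈
          LinearMap.range (Matrix.toEuclideanLin γ₂) := by
        rw [aux_mulE]; exact ⟨_, rfl⟩
      have h2 : Matrix.toEuclideanLin (γ₂ * (g * γ₁)) x ∈
          LinearMap.range (Matrix.toEuclideanLin γ₁) := by
        rw [hM1, aux_mulE]; exact ⟨_, rfl⟩
      have hmem : Matrix.toEuclideanLin (γ₂ * (g * γ₁)) x ∈
          LinearMap.range (Matrix.toEuclideanLin γ₁) ⊓
            LinearMap.range (Matrix.toEuclideanLin γ₂) := ⟨h2, h1⟩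
      rw [hdisj] at hmem
      simpa using hmem
    exact (LinearEquiv.map_eq_zero_iff _).mp hker
  have γ₁gγ₁ : γ₁ * (g * γ₁) = γ₁ := by
    have := hM1.symm.trans hzero
    have h' : γ₁ - γ₁ * (g * γ₁) = 0 := by
      calc γ₁ - γ₁ * (g * γ₁) = γ₁ * (1 - g * γ₁) := by noncomm_ring
        _ = 0 := this
    exact (sub_eq_zero.mp h').symm
  have γ₁gγ₂ : γ₁ * (g * γ₂) = 0 := by
    have h := congrArg conjTranspose hzero
    rw [conjTranspose_mul, conjTranspose_mul, conjTranspose_zero, hγ₁h, hγ₂h, gherm] at h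
    rwa [Matrix.mul_assoc] at h
  have γ₂gγ₂ : γ₂ * (g * γ₂) = γ₂ := by
    have h2 : γ₁ * (g * γ₂) + γ₂ * (g * γ₂) = γ₂ := by
      calc γ₁ * (g * γ₂) + γ₂ * (g * γ₂) = H * g * γ₂ := by rw [hHdef]; noncomm_ring
        _ = γ₂ := Hgγ₂
    calc γ₂ * (g * γ₂) = (γ₁ * (g * γ₂) + γ₂ * (g * γ₂)) - γ₁ * (g * γ₂) := by abel
      _ = γ₂ - 0 := by rw [h2, γ₁gγ₂]
      _ = γ₂ := sub_zero _
  -- square-root level support facts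
  have s₂gγ₁ : s₂ * (g * γ₁) = 0 := by
    apply aux_cancel hs₂h
    calc s₂ * (s₂ * (g * γ₁)) = (s₂ * s₂) * (g * γ₁) := by rw [Matrix.mul_assoc]
      _ = γ₂ * (g * γ₁) := by rw [hs₂m]
      _ = 0 := hzero
  have s₁gγ₂ : s₁ * (g * γ₂) = 0 := by
    apply aux_cancel hs₁h
    calc s₁ * (s₁ * (g * γ₂)) = (s₁ * s₁) * (g * γ₂) := by rw [Matrix.mul_assoc]
      _ = γ₁ * (g * γ₂) := by rw [hs₁m]
      _ = 0 := γ₁gγ₂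
  have s₁gγ₁ : s₁ * (g * γ₁) = s₁ := by
    have h0 : s₁ * (g * γ₁ - 1) = 0 := by
      apply aux_cancel hs₁h
      calc s₁ * (s₁ * (g * γ₁ - 1)) = (s₁ * s₁) * (g * γ₁) - s₁ * s₁ := by noncomm_ring
        _ = γ₁ * (g * γ₁) - γ₁ := by rw [hs₁m]
        _ = 0 := by rw [γ₁gγ₁, sub_self]
    have h0' : s₁ * (g * γ₁) - s₁ = 0 := by
      calc s₁ * (g * γ₁) - s₁ = s₁ * (g * γ₁ - 1) := by noncomm_ring
        _ = 0 := h0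
    exact sub_eq_zero.mp h0'
  have s₂gγ₂ : s₂ * (g * γ₂) = s₂ := by
    have h0 : s₂ * (g * γ₂ - 1) = 0 := by
      apply aux_cancel hs₂h
      calc s₂ * (s₂ * (g * γ₂ - 1)) = (s₂ * s₂) * (g * γ₂) - s₂ * s₂ := by noncomm_ring
        _ = γ₂ * (g * γ₂) - γ₂ := by rw [hs₂m]
        _ = 0 := by rw [γ₂gγ₂, sub_self]
    have h0' : s₂ * (g * γ₂) - s₂ = 0 := by
      calc s₂ * (g * γ₂) - s₂ = s₂ * (g * γ₂ - 1) := by noncomm_ring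
        _ = 0 := h0
    exact sub_eq_zero.mp h0'
  -- polar decomposition rearrangements
  have hF₁' : Uᴴ * s₂ * s₁ = F₁ := by
    have := congrArg conjTranspose hpol₁
    rwa [conjTranspose_mul, conjTranspose_mul, hs₁h, hs₂h, hF₁.1.eq, ← Matrix.mul_assoc]
      at this
  have hF₂' : s₂ * s₁ * Uᴴ = F₂ := by
    have := congrArg conjTranspose hpol₂
    rwa [conjTranspose_mul, conjTranspose_mul, hs₁h, hs₂h, hF₂.1.eq, ← Matrix.mul_assoc]
      at this
  -- the main computation
  have keyA : s₁ * (γ₁ - F₁) * s₁ = γ₁ * (γ₁ - s₂ * U * s₁) := by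
    rw [← hpol₁, ← hs₁m]; noncomm_ring
  have keyB : s₂ * (γ₂ - F₂) * s₂ = γ₂ * (γ₂ - s₁ * Uᴴ * s₂) := by
    rw [← hF₂', ← hs₂m]; noncomm_ring
  have comp1 : s₁ * (g * A) = (s₁ - Uᴴ * s₂) * γ₁ := by
    have step1 : s₁ * (g * A) = s₁ * (γ₁ - s₂ * U * s₁) := by
      rw [hAdef, keyA, keyB]
      calc s₁ * (g * (γ₁ * (γ₁ - s₂ * U * s₁) + γ₂ * (γ₂ - s₁ * Uᴴ * s₂)))
          = (s₁ * (g * γ₁)) * (γ₁ - s₂ * U * s₁)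
            + (s₁ * (g * γ₂)) * (γ₂ - s₁ * Uᴴ * s₂) := by noncomm_ring
        _ = s₁ * (γ₁ - s₂ * U * s₁) := by rw [s₁gγ₁, s₁gγ₂]; noncomm_ring
    rw [step1]
    have hF : s₁ * (s₂ * U * s₁) = Uᴴ * s₂ * γ₁ := by
      calc s₁ * (s₂ * U * s₁) = (s₁ * s₂ * U) * s₁ := by noncomm_ring
        _ = F₁ * s₁ := by rw [hpol₁]
        _ = (Uᴴ * s₂ * s₁) * s₁ := by rw [hF₁']
        _ = Uᴴ * s₂ * (s₁ * s₁) := by noncomm_ring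
        _ = Uᴴ * s₂ * γ₁ := by rw [hs₁m]
    calc s₁ * (γ₁ - s₂ * U * s₁) = s₁ * γ₁ - s₁ * (s₂ * U * s₁) := by noncomm_ring
      _ = s₁ * γ₁ - Uᴴ * s₂ * γ₁ := by rw [hF]
      _ = (s₁ - Uᴴ * s₂) * γ₁ := by noncomm_ring
  have comp2 : s₂ * (g * A) = (s₂ - U * s₁) * γ₂ := by
    have step1 : s₂ * (g * A) = s₂ * (γ₂ - s₁ * Uᴴ * s₂) := by
      rw [hAdef, keyA, keyB]
      calc s₂ * (g * (γ₁ * (γ₁ - s₂ * U * s₁) + γ₂ * (γ₂ - s₁ * Uᴴ * s₂)))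
          = (s₂ * (g * γ₁)) * (γ₁ - s₂ * U * s₁)
            + (s₂ * (g * γ₂)) * (γ₂ - s₁ * Uᴴ * s₂) := by noncomm_ring
        _ = s₂ * (γ₂ - s₁ * Uᴴ * s₂) := by rw [s₂gγ₁, s₂gγ₂]; noncomm_ring
    rw [step1]
    have hF : s₂ * (s₁ * Uᴴ * s₂) = U * s₁ * γ₂ := by
      calc s₂ * (s₁ * Uᴴ * s₂) = (s₂ * s₁ * Uᴴ) * s₂ := by noncomm_ring
        _ = F₂ * s₂ := by rw [hF₂']
        _ = (U * s₁ * s₂) * s₂ := by rw [hpol₂]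
        _ = U * s₁ * (s₂ * s₂) := by noncomm_ring
        _ = U * s₁ * γ₂ := by rw [hs₂m]
    calc s₂ * (γ₂ - s₁ * Uᴴ * s₂) = s₂ * γ₂ - s₂ * (s₁ * Uᴴ * s₂) := by noncomm_ring
      _ = s₂ * γ₂ - U * s₁ * γ₂ := by rw [hF]
      _ = (s₂ - U * s₁) * γ₂ := by noncomm_ring
  have key2 : s₁ * (g * A * g) - Uᴴ * (s₂ * (g * A * g)) = s₁ - Uᴴ * s₂ := by
    calc s₁ * (g * A * g) - Uᴴ * (s₂ * (g * A * g))
        = (s₁ * (g * A)) * g - Uᴴ * ((s₂ * (g * A)) * g) := by noncomm_ring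
      _ = ((s₁ - Uᴴ * s₂) * γ₁) * g - Uᴴ * (((s₂ - U * s₁) * γ₂) * g) := by
          rw [comp1, comp2]
      _ = (s₁ - Uᴴ * s₂) * (γ₁ * g) + ((Uᴴ * U) * s₁ - Uᴴ * s₂) * (γ₂ * g) := by
          noncomm_ring
      _ = (s₁ - Uᴴ * s₂) * (γ₁ * g) + (s₁ - Uᴴ * s₂) * (γ₂ * g) := by
          rw [hUU, Matrix.one_mul]
      _ = s₁ * (H * g) - Uᴴ * (s₂ * (H * g)) := by rw [hHdef]; noncomm_ring
      _ = s₁ - Uᴴ * s₂ := by rw [s₁Hg, s₂Hg]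
  have hleft : s₁ * E = (Uᴴ * s₂) * E := by
    have hd : s₁ * E - (Uᴴ * s₂) * E = 0 := by
      calc s₁ * E - (Uᴴ * s₂) * E
          = (s₁ - Uᴴ * s₂) - (s₁ * (g * A * g) - Uᴴ * (s₂ * (g * A * g))) := by
            rw [hEdef]; noncomm_ring
        _ = 0 := by rw [key2, sub_self]
    exact sub_eq_zero.mp hd
  -- Hermiticity of E
  have hAherm : Aᴴ = A := by
    rw [hAdef]
    simp only [conjTranspose_add, conjTranspose_mul, conjTranspose_sub, hs₁h, hs₂h,
      hγ₁h, hγ₂h, hF₁.1.eq, hF₂.1.eq, Matrix.mul_assoc]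
  have hEherm : Eᴴ = E := by
    rw [hEdef]
    simp only [conjTranspose_sub, conjTranspose_one, conjTranspose_mul, gherm, hAherm,
      Matrix.mul_assoc]
  have part1 : E * s₁ = E * s₂ * U := by
    have := congrArg conjTranspose hleft
    rwa [conjTranspose_mul, conjTranspose_mul, conjTranspose_mul, hEherm, hs₁h, hs₂h,
      conjTranspose_conjTranspose, ← Matrix.mul_assoc] at this
  refine ⟨part1, ?_⟩
  have hleft' : s₂ * E = (s₂ * E) := rfl
  calc E * γ₁ * E = (E * s₁) * (s₁ * E) := by rw [← hs₁m]; noncomm_ring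
    _ = (E * s₂ * U) * ((Uᴴ * s₂) * E) := by rw [part1, hleft]
    _ = E * (s₂ * ((U * Uᴴ) * (s₂ * E))) := by noncomm_ring
    _ = E * (s₂ * (s₂ * E)) := by rw [hUU', Matrix.one_mul]
    _ = E * γ₂ * E := by rw [← hs₂m]; noncomm_ring
end
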